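/- Uniform integral estimate: let 0 ≤ σ₁ < 1/2 and 2σ₁ < σ₂, and let ε ∈ (0,1). Then there exists a constant C depending only on σ₁ and σ₂ (independent of ε and of s*) such that for every s* ∈ ℝ: ∫_{−log ε}^{∞} e^{σ₁ s}·(1 + |e^{s/2} − e^{s*/2}|)^{−σ₂} ds ≤ C. -/

import Mathlib

/-!
Uniform integral estimate underlying Lemma 6.2: for `0 ≤ σ₁ < 1/2` and
`2σ₁ < σ₂` there is a constant `C = C(σ₁,σ₂)`, independent of `ε ∈ (0,1)` and of
`s* ∈ ℝ`, such that
`∫_{-log ε}^∞ e^{σ₁ s} (1 + |e^{s/2} - e^{s*/2}|)^{-σ₂} ds ≤ C`.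
-/

open MeasureTheory

/-- If `0 < Y ≤ 1 + X` then `(1+X)^(-σ₂) ≤ Y^(-τ)` for `0 < τ ≤ σ₂`. -/
lemma aux_rpow_bound {σ2 τ X Y : ℝ} (hτ : 0 < τ) (hτσ : τ ≤ σ2) (hX : 0 ≤ X)
    (hY : 0 < Y) (hYX : Y ≤ 1 + X) : (1 + X) ^ (-σ2) ≤ Y ^ (-τ) := by
  rcases le_total Y 1 with hY1 | hY1
  · calc (1 + X) ^ (-σ2) ≤ 1 :=
          Real.rpow_le_one_of_one_le_of_nonpos (by linarith) (by linarith)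
      _ ≤ Y ^ (-τ) :=
          Real.one_le_rpow_of_pos_of_le_one_of_nonpos hY hY1 (by linarith)
  · calc (1 + X) ^ (-σ2) ≤ (1 + X) ^ (-τ) :=
          Real.rpow_le_rpow_of_exponent_le (by linarith) (by linarith)
      _ ≤ Y ^ (-τ) := Real.rpow_le_rpow_of_nonpos hY hYX (by linarith)

/-- Mean-value type lower bound for differences of exponentials. -/
lemma exp_diff_lower (u v : ℝ) :
    min (Real.exp u) (Real.exp v) * |u - v| ≤ |Real.exp u - Real.exp v| := by
  wlog h : u ≤ v generalizing u v
  · have := this v u (by linarith)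
    rwa [min_comm, abs_sub_comm, abs_sub_comm (Real.exp v)] at this
  have hm : min (Real.exp u) (Real.exp v) = Real.exp u :=
    min_eq_left (Real.exp_le_exp.2 h)
  have h1 : Real.exp u ≤ Real.exp v := Real.exp_le_exp.2 h
  rw [hm, abs_of_nonpos (by linarith), abs_of_nonpos (by linarith)]
  have h2 : (v - u) + 1 ≤ Real.exp (v - u) := Real.add_one_le_exp _
  have h3 : Real.exp (v - u) * Real.exp u = Real.exp v := by
    rw [← Real.exp_add]; ring_nf
  nlinarith [Real.exp_pos u, Real.exp_pos (v - u)]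

/-- `exp(s/2)^c = exp (c * s / 2)`. -/
lemma exp_rpow_eq (s c : ℝ) : Real.exp (s / 2) ^ c = Real.exp (c * s / 2) := by
  rw [Real.rpow_def_of_pos (Real.exp_pos _), Real.log_exp]
  ring_nf

/-- Key pointwise bound. -/
lemma pointwise_bound (σ1 σ2 τ : ℝ) (h1 : 0 ≤ σ1) (hτ1 : 2 * σ1 < τ)
    (hτσ2 : τ ≤ σ2) (hτpos : 0 < τ) (sstar s : ℝ) (hs : 0 < s) (hne : s ≠ sstar) :
    Real.exp (σ1 * s) * (1 + |Real.exp (s / 2) - Real.exp (sstar / 2)|) ^ (-σ2) ≤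
      (2:ℝ) ^ τ * Real.exp ((σ1 - τ / 2) * s) +
        Set.indicator (Set.Icc (sstar - 2 * Real.log 2) (sstar + 2 * Real.log 2))
          (fun v => (6:ℝ) ^ τ * |v - sstar| ^ (-τ)) s := by
  set x := Real.exp (s / 2) with hxdef
  set b := Real.exp (sstar / 2) with hbdef
  have hxpos : 0 < x := Real.exp_pos _
  have hbpos : 0 < b := Real.exp_pos _
  have hx1 : 1 < x := Real.one_lt_exp_iff.2 (by linarith)
  have hind_nonneg :
      0 ≤ Set.indicator (Set.Icc (sstar - 2 * Real.log 2) (sstar + 2 * Real.log 2))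
        (fun v => (6:ℝ) ^ τ * |v - sstar| ^ (-τ)) s := by
    apply Set.indicator_nonneg
    intro v _
    positivity
  have hexp_eq : Real.exp (σ1 * s) = x ^ (2 * σ1) := by
    rw [hxdef, exp_rpow_eq]; ring_nf
  by_cases hfar : x / 2 ≤ |x - b|
  · -- far region
    have key : (1 + |x - b|) ^ (-σ2) ≤ (x / 2) ^ (-τ) :=
      aux_rpow_bound hτpos hτσ2 (abs_nonneg _) (by positivity)
        (by nlinarith [abs_nonneg (x - b)])
    have h4 : (x / 2) ^ (-τ) = 2 ^ τ * x ^ (-τ) := by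
      rw [Real.div_rpow hxpos.le (by norm_num), Real.rpow_neg (by norm_num : (0:ℝ) ≤ 2)]
      field_simp
    have h5 : Real.exp (σ1 * s) * (x ^ (-τ)) = Real.exp ((σ1 - τ / 2) * s) := by
      rw [hxdef, exp_rpow_eq, ← Real.exp_add]
      ring_nf
    have : Real.exp (σ1 * s) * (1 + |x - b|) ^ (-σ2) ≤
        Real.exp (σ1 * s) * ((x / 2) ^ (-τ)) :=
      mul_le_mul_of_nonneg_left key (Real.exp_pos _).le
    calc Real.exp (σ1 * s) * (1 + |x - b|) ^ (-σ2)
        ≤ Real.exp (σ1 * s) * ((x / 2) ^ (-τ)) := this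
      _ = 2 ^ τ * Real.exp ((σ1 - τ / 2) * s) := by rw [h4, ← h5]; ring
      _ ≤ _ := by linarith
  · -- near region
    push_neg at hfar
    have habs := abs_lt.1 hfar
    have hx2b : x < 2 * b := by linarith [habs.1]
    have h2b3x : 2 * b < 3 * x := by linarith [habs.2]
    have hb12 : 1 < 2 * b := by linarith
    -- s/2 = log x, sstar/2 = log b
    have hlogx : Real.log x = s / 2 := by rw [hxdef, Real.log_exp]
    have hlogb : Real.log b = sstar / 2 := by rw [hbdef, Real.log_exp]
    have hlog2 : Real.log x < Real.log 2 + Real.log b := by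
      have := Real.log_lt_log hxpos hx2b
      rwa [Real.log_mul (by norm_num) hbpos.ne'] at this
    have hlog3 : Real.log 2 + Real.log b < Real.log 3 + Real.log x := by
      have := Real.log_lt_log (by positivity) h2b3x
      rwa [Real.log_mul (by norm_num) hbpos.ne', Real.log_mul (by norm_num) hxpos.ne'] at this
    have hlog34 : Real.log 3 ≤ 2 * Real.log 2 := by
      have h4 : Real.log 3 ≤ Real.log 4 := Real.log_le_log (by norm_num) (by norm_num)
      have : Real.log 4 = 2 * Real.log 2 := by
        rw [show (4:ℝ) = 2 * 2 by norm_num, Real.log_mul (by norm_num) (by norm_num)]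
        ring
      linarith
    have hmem : s ∈ Set.Icc (sstar - 2 * Real.log 2) (sstar + 2 * Real.log 2) := by
      constructor <;> [nlinarith [hlogx, hlogb, hlog2, hlog3]; nlinarith [hlogx, hlogb, hlog2]]
    -- MVT lower bound
    have hmin : 2 * b / 3 ≤ min x b := le_min (by linarith) (by linarith)
    have hmvt : b / 3 * |s - sstar| ≤ |x - b| := by
      have h0 := exp_diff_lower (s / 2) (sstar / 2)
      rw [← hxdef, ← hbdef] at h0
      have habs2 : |s / 2 - sstar / 2| = |s - sstar| / 2 := by
        rw [show s / 2 - sstar / 2 = (s - sstar) / 2 by ring, abs_div]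
        norm_num
      rw [habs2] at h0
      nlinarith [abs_nonneg (s - sstar), min_le_left x b]
    have hdpos : 0 < |s - sstar| := abs_pos.2 (sub_ne_zero.2 hne)
    have key : (1 + |x - b|) ^ (-σ2) ≤ (b / 3 * |s - sstar|) ^ (-τ) :=
      aux_rpow_bound hτpos hτσ2 (abs_nonneg _) (by positivity)
        (by nlinarith [abs_nonneg (x - b)])
    have hxb : x ^ (2 * σ1) ≤ (2 * b) ^ (2 * σ1) :=
      Real.rpow_le_rpow hxpos.le hx2b.le (by linarith)
    have hsplit : (b / 3 * |s - sstar|) ^ (-τ) = (b / 3) ^ (-τ) * |s - sstar| ^ (-τ) :=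
      Real.mul_rpow (by positivity) (abs_nonneg _)
    have hM : (2 * b) ^ (2 * σ1) * (b / 3) ^ (-τ) ≤ (6:ℝ) ^ τ := by
      have e1 : (2 * b) ^ (2 * σ1) ≤ (2 * b) ^ τ :=
        Real.rpow_le_rpow_of_exponent_le hb12.le (by linarith)
      have e2 : (b / 3) ^ (-τ) = (3 / b) ^ τ := by
        rw [Real.rpow_neg (by positivity), ← Real.inv_rpow (by positivity), inv_div]
      have e3 : (2 * b) ^ τ * (3 / b) ^ τ = (6:ℝ) ^ τ := by
        rw [← Real.mul_rpow (by positivity) (by positivity)]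
        congr 1
        field_simp
        ring
      have e4 : 0 ≤ (3 / b) ^ τ := Real.rpow_nonneg (by positivity) _
      calc (2 * b) ^ (2 * σ1) * (b / 3) ^ (-τ)
          = (2 * b) ^ (2 * σ1) * (3 / b) ^ τ := by rw [e2]
        _ ≤ (2 * b) ^ τ * (3 / b) ^ τ := mul_le_mul_of_nonneg_right e1 e4
        _ = (6:ℝ) ^ τ := e3
    have hfinal : Real.exp (σ1 * s) * (1 + |x - b|) ^ (-σ2) ≤
        (6:ℝ) ^ τ * |s - sstar| ^ (-τ) := by
      calc Real.exp (σ1 * s) * (1 + |x - b|) ^ (-σ2)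
          ≤ (2 * b) ^ (2 * σ1) * ((b / 3 * |s - sstar|) ^ (-τ)) := by
            apply mul_le_mul
            · rw [hexp_eq]; exact hxb
            · exact key
            · positivity
            · positivity
        _ = ((2 * b) ^ (2 * σ1) * (b / 3) ^ (-τ)) * |s - sstar| ^ (-τ) := by
            rw [hsplit]; ring
        _ ≤ (6:ℝ) ^ τ * |s - sstar| ^ (-τ) := by
            apply mul_le_mul_of_nonneg_right hM (by positivity)
    rw [Set.indicator_of_mem hmem]
    have ht1 : 0 ≤ (2:ℝ) ^ τ * Real.exp ((σ1 - τ / 2) * s) := by positivity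
    linarith

theorem uniform_integral_estimate (σ1 σ2 : ℝ)
    (h1 : 0 ≤ σ1) (h2 : σ1 < 1/2) (h3 : 2 * σ1 < σ2) :
    ∃ C : ℝ, ∀ ε : ℝ, ε ∈ Set.Ioo (0:ℝ) 1 → ∀ sstar : ℝ,
      IntegrableOn
        (fun s => Real.exp (σ1 * s) *
          (1 + |Real.exp (s/2) - Real.exp (sstar/2)|) ^ (-σ2))
        (Set.Ioi (-Real.log ε)) volume ∧
      (∫ s in Set.Ioi (-Real.log ε),
          Real.exp (σ1 * s) *
            (1 + |Real.exp (s/2) - Real.exp (sstar/2)|) ^ (-σ2)) ≤ C := by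
  set τ := (2 * σ1 + min 1 σ2) / 2 with hτdef
  have hm : 2 * σ1 < min 1 σ2 := lt_min (by linarith) h3
  have hτ1 : 2 * σ1 < τ := by rw [hτdef]; linarith
  have hτpos : 0 < τ := by linarith
  have hτlt1 : τ < 1 := by
    have : τ < min 1 σ2 := by rw [hτdef]; linarith
    exact lt_of_lt_of_le this (min_le_left _ _)
  have hτσ2 : τ ≤ σ2 := by
    have : τ < min 1 σ2 := by rw [hτdef]; linarith
    exact le_of_lt (lt_of_lt_of_le this (min_le_right _ _))
  set L := 2 * Real.log 2 with hLdef
  have hL : 0 < L := by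
    have := Real.log_pos (by norm_num : (1:ℝ) < 2)
    rw [hLdef]; linarith
  set M₀ := (6:ℝ) ^ τ with hM₀def
  set F : ℝ → ℝ := fun u => Set.indicator (Set.Icc (-L) L) (fun u => M₀ * |u| ^ (-τ)) u
    with hFdef
  -- F is integrable
  have hII : IntervalIntegrable (fun u : ℝ => |u| ^ (-τ)) volume 0 L := by
    have h0 : IntervalIntegrable (fun u : ℝ => u ^ (-τ)) volume 0 L :=
      intervalIntegral.intervalIntegrable_rpow' (by linarith)
    rw [intervalIntegrable_iff] at h0 ⊢
    apply h0.congr_fun ?_ measurableSet_uIoc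
    intro u hu
    rw [Set.uIoc_of_le hL.le] at hu
    show u ^ (-τ) = |u| ^ (-τ)
    rw [abs_of_pos hu.1]
  have hII2 : IntervalIntegrable (fun u : ℝ => |u| ^ (-τ)) volume (-L) 0 := by
    have h0 := (IntervalIntegrable.iff_comp_neg enorm_ne_top).mp hII
    simp only [abs_neg, neg_zero] at h0
    exact h0.symm
  have hII3 : IntervalIntegrable (fun u : ℝ => M₀ * |u| ^ (-τ)) volume (-L) L :=
    (hII2.trans hII).const_mul M₀
  have hIccInt : IntegrableOn (fun u : ℝ => M₀ * |u| ^ (-τ)) (Set.Icc (-L) L) volume :=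
    (intervalIntegrable_iff_integrableOn_Icc_of_le (by linarith)).mp hII3
  have hFint : Integrable F volume := hIccInt.integrable_indicator measurableSet_Icc
  have hFnonneg : ∀ u, 0 ≤ F u := by
    intro u
    apply Set.indicator_nonneg
    intro v _
    positivity
  -- the exponential tail term
  have htail : IntegrableOn (fun s : ℝ => (2:ℝ) ^ τ * Real.exp ((σ1 - τ / 2) * s))
      (Set.Ioi (0:ℝ)) volume := by
    have h0 : IntegrableOn (fun s : ℝ => Real.exp (-(τ / 2 - σ1) * s))
        (Set.Ioi (0:ℝ)) volume := exp_neg_integrableOn_Ioi 0 (by linarith)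
    have he : (fun s : ℝ => Real.exp (-(τ / 2 - σ1) * s)) =
        fun s : ℝ => Real.exp ((σ1 - τ / 2) * s) := by
      funext s; ring_nf
    rw [he] at h0
    exact h0.const_mul _
  refine ⟨(∫ s in Set.Ioi (0:ℝ), (2:ℝ) ^ τ * Real.exp ((σ1 - τ / 2) * s)) + ∫ u, F u,
    fun ε hε sstar => ?_⟩
  obtain ⟨hε0, hε1⟩ := hε
  set s0 := -Real.log ε with hs0def
  have hs0 : 0 < s0 := by
    have := Real.log_neg hε0 hε1
    rw [hs0def]; linarith
  set f : ℝ → ℝ := fun s => Real.exp (σ1 * s) *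
    (1 + |Real.exp (s/2) - Real.exp (sstar/2)|) ^ (-σ2) with hfdef
  set g : ℝ → ℝ := fun s => (2:ℝ) ^ τ * Real.exp ((σ1 - τ / 2) * s) +
    Set.indicator (Set.Icc (sstar - L) (sstar + L)) (fun v => M₀ * |v - sstar| ^ (-τ)) s
    with hgdef
  have hindF : ∀ s : ℝ,
      Set.indicator (Set.Icc (sstar - L) (sstar + L)) (fun v => M₀ * |v - sstar| ^ (-τ)) s
        = F (s - sstar) := by
    intro s
    rw [hFdef]
    simp only [Set.indicator_apply, Set.mem_Icc]
    have hiff : (sstar - L ≤ s ∧ s ≤ sstar + L) ↔ (-L ≤ s - sstar ∧ s - sstar ≤ L) := by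
      constructor <;> (rintro ⟨a, c⟩; constructor <;> linarith)
    rw [if_congr hiff rfl rfl]
  have hFtr : Integrable (fun s : ℝ => F (s - sstar)) volume :=
    hFint.comp_sub_right sstar
  have hg_int0 : IntegrableOn g (Set.Ioi (0:ℝ)) volume := by
    apply Integrable.add htail
    have : IntegrableOn (fun s : ℝ => F (s - sstar)) (Set.Ioi (0:ℝ)) volume :=
      hFtr.integrableOn
    apply this.congr_fun ?_ measurableSet_Ioi
    intro s _
    exact (hindF s).symm
  have hg_int : IntegrableOn g (Set.Ioi s0) volume :=
    hg_int0.mono_set (Set.Ioi_subset_Ioi hs0.le)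
  have hg_nonneg : ∀ s, 0 ≤ g s := by
    intro s
    rw [hgdef]
    have : 0 ≤ Set.indicator (Set.Icc (sstar - L) (sstar + L))
        (fun v => M₀ * |v - sstar| ^ (-τ)) s := by
      apply Set.indicator_nonneg
      intro v _
      positivity
    positivity
  -- ae bound f ≤ g on Ioi s0
  have hae_ne : ∀ᵐ s : ℝ ∂volume, s ≠ sstar := by
    rw [ae_iff]
    have : {s : ℝ | ¬ s ≠ sstar} = {sstar} := by ext u; simp
    rw [this]
    exact measure_singleton _
  have hfg : ∀ᵐ s ∂(volume.restrict (Set.Ioi s0)), f s ≤ g s := by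
    filter_upwards [ae_restrict_mem measurableSet_Ioi, ae_restrict_of_ae hae_ne]
      with s hs hne
    have hs' : 0 < s := lt_trans hs0 hs
    exact pointwise_bound σ1 σ2 τ h1 hτ1 hτσ2 hτpos sstar s hs' hne
  have hf_nonneg : ∀ s, 0 ≤ f s := by
    intro s
    rw [hfdef]
    positivity
  have hf_cont : Continuous f := by
    apply Continuous.mul
    · exact Real.continuous_exp.comp (continuous_const.mul continuous_id)
    · apply Continuous.rpow_const
      · exact continuous_const.add
          (((Real.continuous_exp.comp (continuous_id.div_const 2)).sub
            continuous_const).abs)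
      · intro s
        left
        have : (0:ℝ) < 1 + |Real.exp (s/2) - Real.exp (sstar/2)| := by positivity
        exact ne_of_gt this
  have hf_int : IntegrableOn f (Set.Ioi s0) volume := by
    apply hg_int.mono' hf_cont.aestronglyMeasurable.restrict
    filter_upwards [hfg] with s hsg
    rw [Real.norm_eq_abs, abs_of_nonneg (hf_nonneg s)]
    exact hsg
  refine ⟨hf_int, ?_⟩
  have step1 : (∫ s in Set.Ioi s0, f s) ≤ ∫ s in Set.Ioi s0, g s :=
    integral_mono_ae hf_int hg_int hfg
  have step2 : (∫ s in Set.Ioi s0, g s) ≤ ∫ s in Set.Ioi (0:ℝ), g s := by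
    apply setIntegral_mono_set hg_int0
    · exact ae_of_all _ fun s => hg_nonneg s
    · exact HasSubset.Subset.eventuallyLE (Set.Ioi_subset_Ioi hs0.le)
  have hgsplit : (∫ s in Set.Ioi (0:ℝ), g s) =
      (∫ s in Set.Ioi (0:ℝ), (2:ℝ) ^ τ * Real.exp ((σ1 - τ / 2) * s)) +
      ∫ s in Set.Ioi (0:ℝ), Set.indicator (Set.Icc (sstar - L) (sstar + L))
        (fun v => M₀ * |v - sstar| ^ (-τ)) s := by
    rw [hgdef]
    apply integral_add htail
    have : IntegrableOn (fun s : ℝ => F (s - sstar)) (Set.Ioi (0:ℝ)) volume :=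
      hFtr.integrableOn
    apply this.congr_fun ?_ measurableSet_Ioi
    intro s _
    exact (hindF s).symm
  have step3 : (∫ s in Set.Ioi (0:ℝ), Set.indicator (Set.Icc (sstar - L) (sstar + L))
      (fun v => M₀ * |v - sstar| ^ (-τ)) s) ≤ ∫ u, F u := by
    have he : (fun s : ℝ => Set.indicator (Set.Icc (sstar - L) (sstar + L))
        (fun v => M₀ * |v - sstar| ^ (-τ)) s) = fun s : ℝ => F (s - sstar) := by
      funext s; exact hindF s
    rw [he]
    calc (∫ s in Set.Ioi (0:ℝ), F (s - sstar)) ≤ ∫ s : ℝ, F (s - sstar) := by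
          apply setIntegral_le_integral hFtr
          exact ae_of_all _ fun s => hFnonneg _
      _ = ∫ u, F u := integral_sub_right_eq_self F sstar
  calc (∫ s in Set.Ioi s0, f s) ≤ ∫ s in Set.Ioi (0:ℝ), g s := le_trans step1 step2
    _ ≤ _ := by rw [hgsplit]; linarith
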